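/- Let λ be a partition with r rows and c columns (conventions λ_i = c for i ≤ 0, λ_i = 0 for i > r, λ'_j = r for j ≤ 0, λ'_j = 0 for j > c) and let n ≥ 0. In the field of rational functions Frac(ℚ[x_ℓ : ℓ ∈ ℤ]), ∏_{i=1}^{r} ∏_{k=1}^{n} (1 − [x]_{−k+1−λ'_{−k+1}}^{λ_i−i}) / (1 − [x]_{−k+1+λ_i−λ'_{−k+1+λ_i}}^{λ_i−i}) = ∏_{(i,j) ∈ λ} (1 − [x]_{−n+j−λ'_{−n+j}}^{λ_i−i}) / (1 − [x]_{j−λ'_j}^{λ_i−i}). -/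

import Mathlib

/-- `lam : ℤ → ℤ` encodes a partition `λ` with `r` rows and `c = λ_1` columns,
with the conventions `λ_i = c` for `i ≤ 0` and `λ_i = 0` for `i > r`. -/
structure PartitionShape (r c : ℤ) (lam : ℤ → ℤ) : Prop where
  one_le_r : 1 ≤ r
  antitone : ∀ i j : ℤ, i ≤ j → lam j ≤ lam i
  low : ∀ i : ℤ, i ≤ 0 → lam i = c
  first : lam 1 = c
  pos : ∀ i : ℤ, 1 ≤ i → i ≤ r → 1 ≤ lam i
  high : ∀ i : ℤ, r < i → lam i = 0

/-- The conjugate partition `λ'_j = #{1 ≤ i ≤ r : λ_i ≥ j}`; this automatically satisfies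
the conventions `λ'_j = r` for `j ≤ 0` and `λ'_j = 0` for `j > c`. -/
noncomputable def conjPart (r : ℤ) (lam : ℤ → ℤ) (j : ℤ) : ℤ :=
  (((Finset.Icc 1 r).filter fun i => j ≤ lam i).card : ℤ)

/-- The cells `(i,j)` of the Young diagram of `λ`: `1 ≤ i ≤ r`, `1 ≤ j ≤ λ_i`. -/
noncomputable def cells (r : ℤ) (lam : ℤ → ℤ) : Finset (ℤ × ℤ) :=
  (Finset.Icc 1 r ×ˢ Finset.Icc 1 (lam 1)).filter fun p => p.2 ≤ lam p.1

/-- A reverse plane partition of shape `λ` with parts at most `n`, encoded as a function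
`ℤ × ℤ → ℕ` vanishing outside the cells of `λ` and weakly increasing along rows and columns. -/
def IsRPP (r : ℤ) (lam : ℤ → ℤ) (n : ℕ) (π : ℤ × ℤ → ℕ) : Prop :=
  (∀ p, p ∉ cells r lam → π p = 0) ∧
  (∀ p ∈ cells r lam, π p ≤ n) ∧
  (∀ i j : ℤ, (i, j) ∈ cells r lam → (i, j + 1) ∈ cells r lam → π (i, j) ≤ π (i, j + 1)) ∧
  (∀ i j : ℤ, (i, j) ∈ cells r lam → (i + 1, j) ∈ cells r lam → π (i, j) ≤ π (i + 1, j))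

/-- The `l`-trace of `π`: the sum of the parts on the diagonal `j - i = l`. -/
noncomputable def rppTrace (r : ℤ) (lam : ℤ → ℤ) (l : ℤ) (π : ℤ × ℤ → ℕ) : ℕ :=
  ∑ p ∈ (cells r lam).filter fun p => p.2 - p.1 = l, π p

/-- `gprod z m n = [z]_m^n`: `∏_{l=m}^{n} z_l` if `m ≤ n`, `1` if `m = n + 1`, and
`(∏_{l=n+1}^{m-1} z_l)⁻¹` if `m ≥ n + 2`. -/
noncomputable def gprod {F : Type*} [Field F] (z : ℤ → F) (m n : ℤ) : F :=
  if m ≤ n + 1 then ∏ l ∈ Finset.Icc m n, z l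
  else (∏ l ∈ Finset.Icc (n + 1) (m - 1), z l)⁻¹

/-- The images of the variables `x_l` in the field of rational functions
`Frac(ℚ[x_l : l ∈ ℤ])`. -/
noncomputable def Xv (l : ℤ) : FractionRing (MvPolynomial ℤ ℚ) :=
  algebraMap (MvPolynomial ℤ ℚ) (FractionRing (MvPolynomial ℤ ℚ)) (MvPolynomial.X l)


open Finset in
lemma prodX_ne_one (s : Finset ℤ) (hs : s.Nonempty) :
    (∏ l ∈ s, MvPolynomial.X l : MvPolynomial ℤ ℚ) ≠ 1 := by
  intro h
  have h2 := congrArg (MvPolynomial.eval (fun _ => (2 : ℚ))) h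
  rw [MvPolynomial.eval_prod] at h2
  simp only [MvPolynomial.eval_X, Finset.prod_const, map_one] at h2
  have : (1 : ℚ) < 2 ^ s.card := one_lt_pow₀ one_lt_two (Finset.card_ne_zero.mpr hs)
  rw [h2] at this
  exact lt_irrefl _ this

lemma gprod_Xv_ne_one {m n : ℤ} (h : m ≠ n + 1) : gprod Xv m n ≠ 1 := by
  have key : ∀ a b : ℤ, a ≤ b →
      (∏ l ∈ Finset.Icc a b, Xv l) ≠ 1 := by
    intro a b hab heq
    have : (algebraMap (MvPolynomial ℤ ℚ) (FractionRing (MvPolynomial ℤ ℚ)))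
        (∏ l ∈ Finset.Icc a b, MvPolynomial.X l) = algebraMap _ _ 1 := by
      rw [map_prod, map_one]; exact heq
    have := IsFractionRing.injective (MvPolynomial ℤ ℚ)
      (FractionRing (MvPolynomial ℤ ℚ)) this
    exact prodX_ne_one _ (Finset.nonempty_Icc.mpr hab) this
  unfold gprod
  split_ifs with hle
  · exact key m n (by omega)
  · rw [ne_eq, inv_eq_one]
    exact key (n + 1) (m - 1) (by omega)

lemma one_sub_gprod_ne_zero {m n : ℤ} (h : m ≠ n + 1) : (1 : FractionRing (MvPolynomial ℤ ℚ)) - gprod Xv m n ≠ 0 :=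
  sub_ne_zero_of_ne (Ne.symm (gprod_Xv_ne_one h))

lemma conj_ge (r : ℤ) (lam : ℤ → ℤ) (hmono : ∀ a b : ℤ, a ≤ b → lam b ≤ lam a)
    {i j : ℤ} (hi : 1 ≤ i) (hir : i ≤ r) (hj : j ≤ lam i) :
    i ≤ conjPart r lam j := by
  have hsub : Finset.Icc 1 i ⊆ (Finset.Icc 1 r).filter fun i' => j ≤ lam i' := by
    intro a ha
    simp only [Finset.mem_Icc, Finset.mem_filter] at *
    exact ⟨⟨ha.1, ha.2.trans hir⟩, hj.trans (hmono a i ha.2)⟩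
  have hc := Finset.card_le_card hsub
  have hcard : (Finset.Icc 1 i).card = i.toNat := by
    rw [Int.card_Icc]; omega
  unfold conjPart
  omega


lemma prod_Ioc_consec {M : Type*} [CommMonoid M] (f : ℤ → M) {a b c : ℤ} (h1 : a ≤ b)
    (h2 : b ≤ c) :
    (∏ j ∈ Finset.Ioc a b, f j) * ∏ j ∈ Finset.Ioc b c, f j = ∏ j ∈ Finset.Ioc a c, f j := by
  rw [← Finset.prod_union (by
    rw [Finset.disjoint_left]
    intro x hx hx'
    simp only [Finset.mem_Ioc] at hx hx'
    omega), Finset.Ioc_union_Ioc_eq_Ioc h1 h2]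

/-- In `Frac(ℚ[x_l : l ∈ ℤ])`,
`∏_{i=1}^{r} ∏_{k=1}^{n} (1 - [x]_{-k+1-λ'_{-k+1}}^{λ_i-i}) /
(1 - [x]_{-k+1+λ_i-λ'_{-k+1+λ_i}}^{λ_i-i}) =
∏_{(i,j) ∈ λ} (1 - [x]_{-n+j-λ'_{-n+j}}^{λ_i-i}) / (1 - [x]_{j-λ'_j}^{λ_i-i})`. -/
theorem product_identity (r : ℤ) (lam : ℤ → ℤ)
    (hP : PartitionShape r (lam 1) lam) (n : ℕ) :
    (∏ i ∈ Finset.Icc (1 : ℤ) r, ∏ k ∈ Finset.Icc (1 : ℤ) (n : ℤ),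
      (1 - gprod Xv (-k + 1 - conjPart r lam (-k + 1)) (lam i - i)) /
        (1 - gprod Xv (-k + 1 + lam i - conjPart r lam (-k + 1 + lam i)) (lam i - i))) =
      ∏ p ∈ cells r lam,
        (1 - gprod Xv (-(n : ℤ) + p.2 - conjPart r lam (-(n : ℤ) + p.2)) (lam p.1 - p.1)) /
          (1 - gprod Xv (p.2 - conjPart r lam p.2) (lam p.1 - p.1)) := by
  obtain ⟨hr, hmono, hlow, hfirst, hpos, hhigh⟩ := hP
  rw [cells, Finset.prod_filter, Finset.prod_product]
  refine Finset.prod_congr rfl fun i hi => ?_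
  rw [Finset.mem_Icc] at hi
  have hL1 : 1 ≤ lam i := hpos i hi.1 hi.2
  have hLc : lam i ≤ lam 1 := hmono 1 i hi.1
  rw [← Finset.prod_filter]
  have hfil : ((Finset.Icc 1 (lam 1)).filter fun j => (i, j).2 ≤ lam (i, j).1)
      = Finset.Icc 1 (lam i) := by
    ext j
    simp only [Finset.mem_filter, Finset.mem_Icc]
    constructor
    · rintro ⟨⟨h1, h2⟩, h3⟩; omega
    · intro h; exact ⟨⟨h.1, h.2.trans hLc⟩, h.2⟩
  rw [hfil]
  set f : ℤ → FractionRing (MvPolynomial ℤ ℚ) :=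
    fun j => 1 - gprod Xv (j - conjPart r lam j) (lam i - i) with hf
  have hfne : ∀ j : ℤ, j ≤ lam i → f j ≠ 0 := fun j hj =>
    one_sub_gprod_ne_zero (by
      have := conj_ge r lam hmono hi.1 hi.2 hj
      omega)
  have e1 : (∏ k ∈ Finset.Icc (1 : ℤ) (n : ℤ),
      (1 - gprod Xv (-k + 1 - conjPart r lam (-k + 1)) (lam i - i)))
      = ∏ j ∈ Finset.Ioc (-(n : ℤ)) 0, f j := by
    refine Finset.prod_nbij' (fun k => -k + 1) (fun j => -j + 1) ?_ ?_ ?_ ?_ ?_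
    · intro k hk; simp only [Finset.mem_Icc, Finset.mem_Ioc] at *; omega
    · intro j hj; simp only [Finset.mem_Icc, Finset.mem_Ioc] at *; omega
    · intro k _; omega
    · intro j _; omega
    · intro k _; rfl
  have e2 : (∏ k ∈ Finset.Icc (1 : ℤ) (n : ℤ),
      (1 - gprod Xv (-k + 1 + lam i - conjPart r lam (-k + 1 + lam i)) (lam i - i)))
      = ∏ j ∈ Finset.Ioc (lam i - (n : ℤ)) (lam i), f j := by
    refine Finset.prod_nbij' (fun k => -k + 1 + lam i) (fun j => -j + 1 + lam i) ?_ ?_ ?_ ?_ ?_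
    · intro k hk; simp only [Finset.mem_Icc, Finset.mem_Ioc] at *; omega
    · intro j hj; simp only [Finset.mem_Icc, Finset.mem_Ioc] at *; omega
    · intro k _; omega
    · intro j _; omega
    · intro k _; rfl
  have e3 : (∏ j ∈ Finset.Icc (1 : ℤ) (lam i),
      (1 - gprod Xv (-(n : ℤ) + j - conjPart r lam (-(n : ℤ) + j)) (lam i - i)))
      = ∏ j ∈ Finset.Ioc (-(n : ℤ)) (lam i - (n : ℤ)), f j := by
    refine Finset.prod_nbij' (fun j => -(n : ℤ) + j) (fun j => (n : ℤ) + j) ?_ ?_ ?_ ?_ ?_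
    · intro j hj; simp only [Finset.mem_Icc, Finset.mem_Ioc] at *; omega
    · intro j hj; simp only [Finset.mem_Icc, Finset.mem_Ioc] at *; omega
    · intro j _; omega
    · intro j _; omega
    · intro j _; rfl
  have e4 : (∏ j ∈ Finset.Icc (1 : ℤ) (lam i),
      (1 - gprod Xv (j - conjPart r lam j) (lam i - i)))
      = ∏ j ∈ Finset.Ioc (0 : ℤ) (lam i), f j := by
    apply Finset.prod_congr
    · ext j; simp only [Finset.mem_Icc, Finset.mem_Ioc]; omega
    · intro j _; rfl
  rw [Finset.prod_div_distrib, Finset.prod_div_distrib, e1, e2, e3, e4]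
  have hd1 : (∏ j ∈ Finset.Ioc (lam i - (n : ℤ)) (lam i), f j) ≠ 0 := by
    rw [Finset.prod_ne_zero_iff]
    intro j hj
    rw [Finset.mem_Ioc] at hj
    exact hfne j hj.2
  have hd2 : (∏ j ∈ Finset.Ioc (0 : ℤ) (lam i), f j) ≠ 0 := by
    rw [Finset.prod_ne_zero_iff]
    intro j hj
    rw [Finset.mem_Ioc] at hj
    exact hfne j hj.2
  rw [div_eq_div_iff hd1 hd2]
  rw [prod_Ioc_consec f (by omega) (by omega),
    mul_comm (∏ j ∈ Finset.Ioc (-(n : ℤ)) (lam i - (n : ℤ)), f j),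
    mul_comm (∏ j ∈ Finset.Ioc (lam i - (n : ℤ)) (lam i), f j),
    prod_Ioc_consec f (by omega) (by omega)]
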